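/- Residual bound after projecting out the top entries for the squared-variable map: let x, x* ∈ ℝ^r satisfy (a) for all indices i, j with (x*_i)² ≠ (x*_j)², ‖x⊙x − x*⊙x*‖₂ ≤ |(x*_i)² − (x*_j)²|/2, and (b) for every index i with x*_i ≠ 0, ‖x⊙x − x*⊙x*‖₂ ≤ (x*_i)²/2. Let π be a permutation of Fin r such that both i ↦ (x_{π(i)})² and i ↦ (x*_{π(i)})² are nonincreasing, and let r* be the number of nonzero entries of x*. Then for every natural number k with r* ≤ k < r (indices of Fin r taken 0-based), Σ_{i ∈ Fin r, i ≥ k} ((x_{π(i)})² − (x*_{π(i)})²)² ≤ (r − k)·(2·x_{π(k)})⁴; equivalently, the Euclidean norm of the vector obtained from x⊙x − x*⊙x* by zeroing the coordinates π(0), …, π(k−1) is at most √(r − k)·σ², where σ := 2·|x_{π(k)}| is the (k+1)-st largest singular value of the Jacobian 2·diag(x) of the squared-variable map at x. -/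

import Mathlib

/-- Residual bound after projecting out the top entries for the squared-variable map:
zeroing the coordinates `π 0, …, π (k−1)` of `x⊙x − x*⊙x*` leaves a vector whose squared
Euclidean norm is at most `(r − k)·(2·x_{π k})⁴`, where `2·|x_{π k}|` is the `(k+1)`-st
largest singular value of the Jacobian `2·diag x` of the squared-variable map at `x`. -/
theorem squared_variable_residual_bound {r : ℕ} (x xs : Fin r → ℝ)
    (ha : ∀ i j : Fin r, (xs i) ^ 2 ≠ (xs j) ^ 2 →
      Real.sqrt (∑ k, (x k * x k - xs k * xs k) ^ 2) ≤ |(xs i) ^ 2 - (xs j) ^ 2| / 2)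
    (hb : ∀ i : Fin r, xs i ≠ 0 →
      Real.sqrt (∑ k, (x k * x k - xs k * xs k) ^ 2) ≤ (xs i) ^ 2 / 2)
    (π : Equiv.Perm (Fin r))
    (hxord : Antitone fun i : Fin r => (x (π i)) ^ 2)
    (hxsord : Antitone fun i : Fin r => (xs (π i)) ^ 2) :
    ∀ k : ℕ, (Finset.univ.filter fun i : Fin r => xs i ≠ 0).card ≤ k → ∀ hk : k < r,
      ∑ i ∈ Finset.univ.filter fun i : Fin r => k ≤ (i : ℕ),
          ((x (π i)) ^ 2 - (xs (π i)) ^ 2) ^ 2 ≤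
        ((r : ℝ) - (k : ℝ)) * (2 * x (π ⟨k, hk⟩)) ^ 4 := by
  intro k hcard hk
  set k' : Fin r := ⟨k, hk⟩ with hk'
  -- all entries with index ≥ k are zero for xs∘π
  have h0 : ∀ i : Fin r, k ≤ (i : ℕ) → xs (π i) = 0 := by
    intro i hi
    by_contra hne
    have hsub : Finset.Iic i ⊆ Finset.univ.filter fun j : Fin r => xs (π j) ≠ 0 := by
      intro j hj
      simp only [Finset.mem_Iic] at hj
      simp only [Finset.mem_filter, Finset.mem_univ, true_and]
      intro hz
      have h1 : (xs (π i)) ^ 2 ≤ (xs (π j)) ^ 2 := hxsord hj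
      have h2 : (0 : ℝ) < (xs (π i)) ^ 2 := by positivity
      rw [hz] at h1
      nlinarith
    have hc1 : (Finset.Iic i).card = (i : ℕ) + 1 := by
      simp [Fin.card_Iic]
    have hc2 : (Finset.univ.filter fun j : Fin r => xs (π j) ≠ 0).card
        = (Finset.univ.filter fun i : Fin r => xs i ≠ 0).card := by
      apply Finset.card_bij (fun j _ => π j)
      · intro a ha'
        simp only [Finset.mem_filter, Finset.mem_univ, true_and] at ha' ⊢
        exact ha'
      · intro a _ b _ hab
        exact π.injective hab
      · intro b hb'
        refine ⟨π.symm b, ?_, by simp⟩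
        simp only [Finset.mem_filter, Finset.mem_univ, true_and] at hb' ⊢
        simpa using hb'
    have := Finset.card_le_card hsub
    omega
  have hcardset : (Finset.univ.filter fun i : Fin r => k ≤ (i : ℕ)).card = r - k := by
    have : (Finset.univ.filter fun i : Fin r => k ≤ (i : ℕ)) = Finset.Ici k' := by
      ext i
      simp [Finset.mem_Ici, Fin.le_def, hk']
    rw [this]
    simp [Fin.card_Ici, hk']
  calc ∑ i ∈ Finset.univ.filter fun i : Fin r => k ≤ (i : ℕ),
          ((x (π i)) ^ 2 - (xs (π i)) ^ 2) ^ 2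
      ≤ ∑ _i ∈ Finset.univ.filter fun i : Fin r => k ≤ (i : ℕ), (2 * x (π k')) ^ 4 := by
        apply Finset.sum_le_sum
        intro i hi
        simp only [Finset.mem_filter, Finset.mem_univ, true_and] at hi
        rw [h0 i hi]
        have hle : (x (π i)) ^ 2 ≤ (x (π k')) ^ 2 := hxord (show k' ≤ i from hi)
        have hnn : (0 : ℝ) ≤ (x (π i)) ^ 2 := sq_nonneg _
        nlinarith [sq_nonneg (x (π k'))]
    _ = ((Finset.univ.filter fun i : Fin r => k ≤ (i : ℕ)).card : ℝ) * (2 * x (π k')) ^ 4 := by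
        rw [Finset.sum_const, nsmul_eq_mul]
    _ ≤ ((r : ℝ) - (k : ℝ)) * (2 * x (π k')) ^ 4 := by
        rw [hcardset]
        have : ((r - k : ℕ) : ℝ) = (r : ℝ) - (k : ℝ) := by
          push_cast [Nat.cast_sub (le_of_lt hk)]; ring
        rw [this]
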